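/- arXiv:2401.15567 — 3 statements merged into one kernel-verified Lean document; each statement's English description precedes it below -/
import Mathlib

section
/- Let X be a random d×d real symmetric positive semidefinite matrix with integrable entries, let U be a trace super-uniform random d×d positive semidefinite matrix independent of X, and let A be a d×d symmetric positive definite matrix. Then P( X ⋠ A^{1/2} U A^{1/2} ) ≤ tr( E[X] · A⁻¹ ). -/
open MeasureTheory ProbabilityTheory Matrix Filter

noncomputable section

/-- Measurable space structure on matrices (entrywise). -/
instance matMS (d : ℕ) : MeasurableSpace (Matrix (Fin d) (Fin d) ℝ) :=
  inferInstanceAs (MeasurableSpace (Fin d → Fin d → ℝ))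

/-- Loewner order: `A ⪯ B` iff `B - A` is positive semidefinite. -/
def LoewnerLE {d : ℕ} (A B : Matrix (Fin d) (Fin d) ℝ) : Prop := (B - A).PosSemidef

/-- Entrywise expectation of a random matrix. -/
def matExpect {Ω : Type*} {_ : MeasurableSpace Ω} {d : ℕ} (μ : Measure Ω)
    (X : Ω → Matrix (Fin d) (Fin d) ℝ) : Matrix (Fin d) (Fin d) ℝ :=
  Matrix.of fun i j => ∫ ω, X ω i j ∂μ

/-- Entrywise conditional expectation of a random matrix. -/
def matCondExp {Ω : Type*} {m0 : MeasurableSpace Ω} {d : ℕ} (μ : Measure Ω)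
    (m : MeasurableSpace Ω) (X : Ω → Matrix (Fin d) (Fin d) ℝ) : Ω → Matrix (Fin d) (Fin d) ℝ :=
  fun ω => Matrix.of fun i j => (μ[fun ω' => X ω' i j | m]) ω

/-- Spectral functional calculus for real symmetric matrices: apply `f` to the eigenvalues. -/
def matCFC {d : ℕ} (f : ℝ → ℝ) (X : Matrix (Fin d) (Fin d) ℝ) : Matrix (Fin d) (Fin d) ℝ :=
  if hX : X.IsHermitian then
    (hX.eigenvectorUnitary : Matrix (Fin d) (Fin d) ℝ) *
      Matrix.diagonal (fun i => f (hX.eigenvalues i)) *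
      star (hX.eigenvectorUnitary : Matrix (Fin d) (Fin d) ℝ)
  else 0

/-- Positive semidefinite square root (via the spectral calculus). -/
def matSqrt {d : ℕ} (X : Matrix (Fin d) (Fin d) ℝ) : Matrix (Fin d) (Fin d) ℝ :=
  matCFC Real.sqrt X

/-- Matrix absolute value of a symmetric matrix. -/
def matAbs {d : ℕ} (X : Matrix (Fin d) (Fin d) ℝ) : Matrix (Fin d) (Fin d) ℝ :=
  matCFC (fun x => |x|) X

/-- Real power of a symmetric (positive (semi)definite) matrix. -/
def matRPow {d : ℕ} (p : ℝ) (X : Matrix (Fin d) (Fin d) ℝ) : Matrix (Fin d) (Fin d) ℝ :=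
  matCFC (fun x => x ^ p) X

/-- Matrix logarithm of a positive definite matrix. -/
def matLog {d : ℕ} (X : Matrix (Fin d) (Fin d) ℝ) : Matrix (Fin d) (Fin d) ℝ :=
  matCFC Real.log X

/-- Matrix exponential. -/
def matExpMat {d : ℕ} (X : Matrix (Fin d) (Fin d) ℝ) : Matrix (Fin d) (Fin d) ℝ :=
  NormedSpace.exp X

/-- Largest eigenvalue of a symmetric matrix. -/
def lamMax {d : ℕ} (X : Matrix (Fin d) (Fin d) ℝ) : ℝ :=
  if hX : X.IsHermitian then ⨆ i, hX.eigenvalues i else 0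

/-- Operator (spectral) norm: the largest absolute value of an eigenvalue. -/
def specNorm {d : ℕ} (X : Matrix (Fin d) (Fin d) ℝ) : ℝ :=
  if hX : X.IsHermitian then ⨆ i, |hX.eigenvalues i| else 0

/-- A random positive semidefinite matrix `U` is trace super-uniform if
`P(U ⋡ Y) ≤ tr Y` for every positive semidefinite `Y`. -/
def TraceSuperUniform {Ω : Type*} {_ : MeasurableSpace Ω} {d : ℕ} (μ : Measure Ω)
    (U : Ω → Matrix (Fin d) (Fin d) ℝ) : Prop :=
  ∀ Y : Matrix (Fin d) (Fin d) ℝ, Y.PosSemidef →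
    μ {ω | ¬ LoewnerLE Y (U ω)} ≤ ENNReal.ofReal Y.trace

/-- Matrix supermartingale: adapted, symmetric, entrywise integrable, and
`E(Y (n+1) | ℱ n) ⪯ Y n` a.s. for every `n`. -/
def IsMatrixSupermartingale {Ω : Type*} {m0 : MeasurableSpace Ω} {d : ℕ}
    (ℱ : Filtration ℕ m0) (μ : Measure Ω) (Y : ℕ → Ω → Matrix (Fin d) (Fin d) ℝ) : Prop :=
  (∀ n ω, (Y n ω).IsHermitian) ∧
  (∀ n i j, StronglyMeasurable[ℱ n] fun ω => Y n ω i j) ∧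
  (∀ n i j, Integrable (fun ω => Y n ω i j) μ) ∧
  (∀ n, ∀ᵐ ω ∂μ, LoewnerLE (matCondExp μ (ℱ n) (Y (n + 1)) ω) (Y n ω))

/-- Matrix submartingale: adapted, symmetric, entrywise integrable, and
`E(Y (n+1) | ℱ n) ⪰ Y n` a.s. for every `n`. -/
def IsMatrixSubmartingale {Ω : Type*} {m0 : MeasurableSpace Ω} {d : ℕ}
    (ℱ : Filtration ℕ m0) (μ : Measure Ω) (Y : ℕ → Ω → Matrix (Fin d) (Fin d) ℝ) : Prop :=
  (∀ n ω, (Y n ω).IsHermitian) ∧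
  (∀ n i j, StronglyMeasurable[ℱ n] fun ω => Y n ω i j) ∧
  (∀ n i j, Integrable (fun ω => Y n ω i j) μ) ∧
  (∀ n, ∀ᵐ ω ∂μ, LoewnerLE (Y n ω) (matCondExp μ (ℱ n) (Y (n + 1)) ω))

/-- Exchangeability of a sequence of random matrices: any finitely supported permutation
of the indices leaves the joint law invariant. -/
def MatExchangeable {Ω : Type*} {_ : MeasurableSpace Ω} {d : ℕ} (μ : Measure Ω)
    (X : ℕ → Ω → Matrix (Fin d) (Fin d) ℝ) : Prop :=
  ∀ σ : Equiv.Perm ℕ, {n | σ n ≠ n}.Finite →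
    Measure.map (fun ω n => X (σ n) ω) μ = Measure.map (fun ω n => X n ω) μ


section AuxLemmas

/-- Borel space structure on matrices, compatible with `matMS`. -/
instance matBorel (d : ℕ) : BorelSpace (Matrix (Fin d) (Fin d) ℝ) :=
  inferInstanceAs (BorelSpace (Fin d → Fin d → ℝ))

lemma matSqrt_eq {d : ℕ} {A : Matrix (Fin d) (Fin d) ℝ} (hA : A.PosSemidef) :
    matSqrt A = (hA.1.eigenvectorUnitary : Matrix (Fin d) (Fin d) ℝ) *
      Matrix.diagonal (fun i => Real.sqrt (hA.1.eigenvalues i)) *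
      star (hA.1.eigenvectorUnitary : Matrix (Fin d) (Fin d) ℝ) := by
  rw [matSqrt, matCFC, dif_pos hA.1]

lemma loewner_trans {d : ℕ} {a b c : Matrix (Fin d) (Fin d) ℝ}
    (h1 : LoewnerLE a b) (h2 : LoewnerLE b c) : LoewnerLE a c := by
  have := h2.add h1
  simpa [LoewnerLE, sub_add_sub_cancel] using this

lemma conj_loewner {d : ℕ} {B C X U : Matrix (Fin d) (Fin d) ℝ}
    (hB : B.IsHermitian) (hC : C.IsHermitian) (hCB : C * B = 1) (hBC : B * C = 1) :
    LoewnerLE X (B * U * B) ↔ LoewnerLE (C * X * C) U := by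
  constructor
  · intro h
    have h2 := h.mul_mul_conjTranspose_same C
    rw [hC.eq] at h2
    have e : C * (B * U * B - X) * C = U - C * X * C := by
      rw [Matrix.mul_sub, Matrix.sub_mul]
      congr 1
      calc C * (B * U * B) * C = (C * B) * U * (B * C) := by
            simp only [Matrix.mul_assoc]
        _ = U := by rw [hCB, hBC, one_mul, mul_one]
    rwa [e] at h2
  · intro h
    have h2 := h.mul_mul_conjTranspose_same B
    rw [hB.eq] at h2
    have e : B * (U - C * X * C) * B = B * U * B - X := by
      rw [Matrix.mul_sub, Matrix.sub_mul]
      congr 1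
      calc B * (C * X * C) * B = (B * C) * X * (C * B) := by
            simp only [Matrix.mul_assoc]
        _ = X := by rw [hBC, hCB, one_mul, mul_one]
    rwa [e] at h2

lemma smul_one_posSemidef {d : ℕ} {c : ℝ} (hc : 0 ≤ c) :
    (c • (1 : Matrix (Fin d) (Fin d) ℝ)).PosSemidef := by
  refine Matrix.PosSemidef.of_dotProduct_mulVec_nonneg ?_ ?_
  · simp [Matrix.IsHermitian, Matrix.conjTranspose_smul]
  · intro x
    have e : star x ⬝ᵥ ((c • (1 : Matrix (Fin d) (Fin d) ℝ)) *ᵥ x) = c * (star x ⬝ᵥ x) := by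
      simp [Matrix.smul_mulVec, Matrix.one_mulVec, dotProduct_smul, smul_eq_mul]
    rw [e]
    exact mul_nonneg hc (dotProduct_star_self_nonneg x)

lemma psd_diag_nonneg {d : ℕ} {M : Matrix (Fin d) (Fin d) ℝ} (hM : M.PosSemidef) (i : Fin d) :
    0 ≤ M i i := by
  have := hM.dotProduct_mulVec_nonneg (Pi.single i 1)
  simpa [dotProduct, Matrix.mulVec, Pi.single_apply, Finset.sum_ite_eq] using this

lemma psd_trace_nonneg {d : ℕ} {M : Matrix (Fin d) (Fin d) ℝ} (hM : M.PosSemidef) :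
    0 ≤ M.trace :=
  Finset.sum_nonneg fun i _ => psd_diag_nonneg hM i

lemma quad_abs_le {d : ℕ} {δ : ℝ} (hδ : 0 ≤ δ) {N : Matrix (Fin d) (Fin d) ℝ}
    (h : ∀ i j, |N i j| ≤ δ) (x : Fin d → ℝ) :
    |x ⬝ᵥ (N *ᵥ x)| ≤ δ * (∑ i, |x i|) ^ 2 := by
  have e : x ⬝ᵥ (N *ᵥ x) = ∑ i, ∑ j, x i * (N i j * x j) := by
    simp [dotProduct, Matrix.mulVec, Finset.mul_sum]
  rw [e]
  calc |∑ i, ∑ j, x i * (N i j * x j)| ≤ ∑ i, ∑ j, |x i * (N i j * x j)| := by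
        refine (Finset.abs_sum_le_sum_abs _ _).trans ?_
        exact Finset.sum_le_sum fun i _ => Finset.abs_sum_le_sum_abs _ _
    _ ≤ ∑ i, ∑ j, |x i| * (δ * |x j|) := by
        refine Finset.sum_le_sum fun i _ => Finset.sum_le_sum fun j _ => ?_
        rw [abs_mul, abs_mul]
        exact mul_le_mul_of_nonneg_left
          (mul_le_mul_of_nonneg_right (h i j) (abs_nonneg _)) (abs_nonneg _)
    _ = δ * (∑ i, |x i|) ^ 2 := by
        simp only [← Finset.mul_sum, ← Finset.sum_mul]
        ring

lemma loewner_of_close {d : ℕ} {δ : ℝ} (hδ : 0 ≤ δ) {P Q : Matrix (Fin d) (Fin d) ℝ}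
    (hP : P.IsHermitian) (hQ : Q.IsHermitian) (h : ∀ i j, |P i j - Q i j| ≤ δ) :
    LoewnerLE P (Q + ((d : ℝ) * δ) • 1) := by
  refine Matrix.PosSemidef.of_dotProduct_mulVec_nonneg ?_ ?_
  · exact ((hQ.add (smul_one_posSemidef (by positivity)).1).sub hP)
  · intro x
    have e : star x ⬝ᵥ ((Q + ((d : ℝ) * δ) • 1 - P) *ᵥ x)
        = x ⬝ᵥ ((Q - P) *ᵥ x) + ((d : ℝ) * δ) * (x ⬝ᵥ x) := by
      simp [Matrix.sub_mulVec, Matrix.add_mulVec, dotProduct_sub, dotProduct_add,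
        Matrix.smul_mulVec, Matrix.one_mulVec, dotProduct_smul, smul_eq_mul]
      ring
    rw [e]
    have hq := quad_abs_le hδ (N := Q - P) (fun i j => by
      simpa [Matrix.sub_apply, abs_sub_comm] using h i j) x
    have hcs : (∑ i, |x i|) ^ 2 ≤ (d : ℝ) * ∑ i, |x i| ^ 2 := by
      simpa using sq_sum_le_card_mul_sum_sq (s := (Finset.univ : Finset (Fin d)))
        (f := fun i => |x i|)
    have hxx : (x ⬝ᵥ x) = ∑ i, |x i| ^ 2 := by
      simp [dotProduct, sq_abs, sq]
    have h2 : δ * (∑ i, |x i|) ^ 2 ≤ δ * ((d : ℝ) * ∑ i, |x i| ^ 2) :=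
      mul_le_mul_of_nonneg_left hcs hδ
    have h3 : (d : ℝ) * δ * (x ⬝ᵥ x) = δ * ((d : ℝ) * ∑ i, |x i| ^ 2) := by
      rw [hxx]; ring
    linarith [neg_abs_le (x ⬝ᵥ ((Q - P) *ᵥ x))]

lemma abs_sub_le_of_floor_div_eq {δ a b : ℝ} (hδ : 0 < δ) (h : ⌊a / δ⌋ = ⌊b / δ⌋) :
    |a - b| ≤ δ := by
  have h1 : |a / δ - b / δ| < 1 := Int.abs_sub_lt_one_of_floor_eq_floor h
  have e : a - b = δ * (a / δ - b / δ) := by field_simp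
  rw [e, abs_mul, abs_of_pos hδ]
  nlinarith

lemma psd_isClosed (d : ℕ) : IsClosed {M : Matrix (Fin d) (Fin d) ℝ | M.PosSemidef} := by
  have hquad : ∀ x : Fin d → ℝ,
      Continuous (fun M : Matrix (Fin d) (Fin d) ℝ => star x ⬝ᵥ (M *ᵥ x)) := by
    intro x
    have h : (fun M : Matrix (Fin d) (Fin d) ℝ => star x ⬝ᵥ (M *ᵥ x))
        = fun M => ∑ i, star x i * ∑ j, M i j * x j := by
      funext M; simp [dotProduct, Matrix.mulVec]
    rw [h]
    apply continuous_finset_sum; intro i _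
    apply Continuous.mul continuous_const
    apply continuous_finset_sum; intro j _
    exact ((continuous_id.matrix_elem i j).mul continuous_const)
  have he : {M : Matrix (Fin d) (Fin d) ℝ | M.PosSemidef}
      = {M | M.IsHermitian} ∩ ⋂ x : Fin d → ℝ, {M | 0 ≤ star x ⬝ᵥ (M *ᵥ x)} := by
    ext M
    simp only [Set.mem_setOf_eq, Set.mem_inter_iff, Set.mem_iInter]
    exact ⟨fun h => ⟨h.1, h.dotProduct_mulVec_nonneg⟩, fun h => .of_dotProduct_mulVec_nonneg h.1 h.2⟩
  rw [he]
  refine IsClosed.inter ?_ (isClosed_iInter fun x => ?_)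
  · have : Continuous (fun M : Matrix (Fin d) (Fin d) ℝ => Mᴴ) :=
      Continuous.matrix_conjTranspose continuous_id
    exact isClosed_eq this continuous_id
  · exact IsClosed.preimage (hquad x) isClosed_Ici

lemma psd_measurableSet (d : ℕ) :
    MeasurableSet {M : Matrix (Fin d) (Fin d) ℝ | M.PosSemidef} :=
  (psd_isClosed d).measurableSet

lemma notLoewner_measurableSet {d : ℕ} (Y : Matrix (Fin d) (Fin d) ℝ) :
    MeasurableSet {M : Matrix (Fin d) (Fin d) ℝ | ¬ LoewnerLE Y M} := by
  have h : {M : Matrix (Fin d) (Fin d) ℝ | ¬ LoewnerLE Y M}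
      = ((fun M : Matrix (Fin d) (Fin d) ℝ => M - Y) ⁻¹'
          {M : Matrix (Fin d) (Fin d) ℝ | M.PosSemidef})ᶜ := by
    ext M; simp [LoewnerLE]
  rw [h]
  refine (MeasurableSet.preimage (psd_measurableSet d) ?_).compl
  have hc : Continuous (fun M : Matrix (Fin d) (Fin d) ℝ => M - Y) := by
    refine continuous_matrix fun i j => ?_
    have e2 : (fun M : Matrix (Fin d) (Fin d) ℝ => (M - Y) i j)
        = fun M => M i j - Y i j := rfl
    rw [e2]
    exact ((continuous_id.matrix_elem i j).sub continuous_const)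
  exact hc.measurable

end AuxLemmas

/-- **Uniformly randomized matrix Markov inequality.**
If `X` is a random positive semidefinite matrix with integrable entries, `U` is a trace
super-uniform random positive semidefinite matrix independent of `X`, and `A ≻ 0`, then
`P(X ⋠ A^{1/2} U A^{1/2}) ≤ tr(E[X] A⁻¹)`. -/
theorem stmt0 {Ω : Type*} {m0 : MeasurableSpace Ω} (μ : Measure Ω) [IsProbabilityMeasure μ]
    {d : ℕ} (X U : Ω → Matrix (Fin d) (Fin d) ℝ)
    (hXpsd : ∀ ω, (X ω).PosSemidef)
    (hXint : ∀ i j, Integrable (fun ω => X ω i j) μ)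
    (hUpsd : ∀ ω, (U ω).PosSemidef)
    (hU : TraceSuperUniform μ U)
    (hindep : IndepFun X U μ)
    (A : Matrix (Fin d) (Fin d) ℝ) (hA : A.PosDef) :
    μ {ω | ¬ LoewnerLE (X ω) (matSqrt A * U ω * matSqrt A)} ≤
      ENNReal.ofReal ((matExpect μ X * A⁻¹).trace) := by
  classical
  -- Square root facts
  have hApsd := hA.posSemidef
  have hsA_herm : (matSqrt A).IsHermitian := by
    rw [matSqrt_eq hApsd]
    simp [Matrix.IsHermitian, Matrix.conjTranspose_mul, Matrix.star_eq_conjTranspose,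
      Matrix.diagonal_conjTranspose, Matrix.mul_assoc]
  have hsq : matSqrt A * matSqrt A = A := by
    rw [matSqrt_eq hApsd]
    set V : Matrix (Fin d) (Fin d) ℝ := (hApsd.1.eigenvectorUnitary : Matrix (Fin d) (Fin d) ℝ)
      with hV
    have hVV : star V * V = 1 := Unitary.coe_star_mul_self _
    have hDD : Matrix.diagonal (fun i => Real.sqrt (hApsd.1.eigenvalues i)) *
        Matrix.diagonal (fun i => Real.sqrt (hApsd.1.eigenvalues i)) =
        Matrix.diagonal hApsd.1.eigenvalues := by
      rw [Matrix.diagonal_mul_diagonal]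
      congr 1; funext i
      exact Real.mul_self_sqrt (hApsd.eigenvalues_nonneg i)
    calc V * Matrix.diagonal (fun i => Real.sqrt (hApsd.1.eigenvalues i)) * star V *
          (V * Matrix.diagonal (fun i => Real.sqrt (hApsd.1.eigenvalues i)) * star V)
        = V * (Matrix.diagonal (fun i => Real.sqrt (hApsd.1.eigenvalues i)) *
          ((star V * V) * Matrix.diagonal (fun i => Real.sqrt (hApsd.1.eigenvalues i)))) * star V := by
          simp only [Matrix.mul_assoc]
      _ = V * Matrix.diagonal hApsd.1.eigenvalues * star V := by
          rw [hVV, Matrix.one_mul, hDD]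
      _ = A := by
          conv_rhs => rw [hApsd.1.spectral_theorem, Unitary.conjStarAlgAut_apply]
          rfl
  have hdet : IsUnit (matSqrt A).det := by
    have hd2 : (matSqrt A).det * (matSqrt A).det = A.det := by
      rw [← Matrix.det_mul, hsq]
    refine isUnit_iff_ne_zero.mpr fun h0 => ?_
    exact hA.det_pos.ne' (by rw [← hd2, h0, mul_zero])
  set sA := matSqrt A with hsA_def
  set S := sA⁻¹ with hS_def
  have hS_herm : S.IsHermitian := by
    rw [hS_def, Matrix.IsHermitian, Matrix.conjTranspose_nonsing_inv, hsA_herm.eq]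
  have h1 : S * sA = 1 := Matrix.nonsing_inv_mul _ hdet
  have h2 : sA * S = 1 := Matrix.mul_nonsing_inv _ hdet
  have hSS : S * S = A⁻¹ := by
    rw [hS_def, ← Matrix.mul_inv_rev, hsq]
  -- Measurable, everywhere-PSD modification of X
  have hXae : ∀ i j, AEMeasurable (fun ω => X ω i j) μ := fun i j => (hXint i j).aemeasurable
  let X' : Ω → Matrix (Fin d) (Fin d) ℝ := fun ω => Matrix.of fun i j => (hXae i j).mk _ ω
  have hX'm : Measurable X' := by
    apply measurable_pi_lambda; intro i; apply measurable_pi_lambda; intro j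
    exact (hXae i j).measurable_mk
  have hXX' : ∀ᵐ ω ∂μ, X ω = X' ω := by
    have h := ae_all_iff.mpr fun i : Fin d => ae_all_iff.mpr fun j : Fin d => (hXae i j).ae_eq_mk
    filter_upwards [h] with ω hω
    ext i j
    exact hω i j
  let X'' : Ω → Matrix (Fin d) (Fin d) ℝ := fun ω => if (X' ω).PosSemidef then X' ω else 0
  have hX''m : Measurable X'' := by
    refine Measurable.ite ?_ hX'm measurable_const
    exact hX'm (psd_measurableSet d)
  have hX''psd : ∀ ω, (X'' ω).PosSemidef := by
    intro ω
    by_cases h : (X' ω).PosSemidef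
    · simpa [X'', h] using h
    · simpa [X'', h] using Matrix.PosSemidef.zero
  have hXX'' : ∀ᵐ ω ∂μ, X ω = X'' ω := by
    filter_upwards [hXX'] with ω h
    simp only [X'', ← h, if_pos (hXpsd ω)]
  have hXint'' : ∀ i j, Integrable (fun ω => X'' ω i j) μ := by
    intro i j
    refine (hXint i j).congr ?_
    filter_upwards [hXX''] with ω h
    rw [h]
  -- The conjugated process
  set g : Ω → Matrix (Fin d) (Fin d) ℝ := fun ω => S * X'' ω * S with hg_def
  have hgpsd : ∀ ω, (g ω).PosSemidef := by
    intro ω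
    have := (hX''psd ω).mul_mul_conjTranspose_same S
    rwa [hS_herm.eq] at this
  have hgm : Measurable g := by
    have hc : Continuous (fun M : Matrix (Fin d) (Fin d) ℝ => S * M * S) :=
      (continuous_const.matrix_mul continuous_id).matrix_mul continuous_const
    exact hc.measurable.comp hX''m
  -- trace identities
  have htre : ∀ M : Matrix (Fin d) (Fin d) ℝ,
      (S * M * S).trace = ∑ i, ∑ j, M i j * A⁻¹ j i := by
    intro M
    calc (S * M * S).trace = (S * (M * S)).trace := by rw [Matrix.mul_assoc]
      _ = ((M * S) * S).trace := Matrix.trace_mul_comm _ _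
      _ = (M * (S * S)).trace := by rw [Matrix.mul_assoc]
      _ = (M * A⁻¹).trace := by rw [hSS]
      _ = ∑ i, ∑ j, M i j * A⁻¹ j i := by
          simp [Matrix.trace, Matrix.diag, Matrix.mul_apply]
  have hInt_tr : Integrable (fun ω => (g ω).trace) μ := by
    have e : (fun ω => (g ω).trace) = fun ω => ∑ i, ∑ j, X'' ω i j * A⁻¹ j i := by
      funext ω; exact htre (X'' ω)
    rw [e]
    refine integrable_finset_sum _ fun i _ => integrable_finset_sum _ fun j _ => ?_
    exact (hXint'' i j).mul_const _
  have hT : ∫ ω, (g ω).trace ∂μ = (matExpect μ X * A⁻¹).trace := by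
    have hXe : ∀ i j, ∫ ω, X'' ω i j ∂μ = ∫ ω, X ω i j ∂μ := by
      intro i j
      refine integral_congr_ae ?_
      filter_upwards [hXX''] with ω h
      rw [h]
    calc ∫ ω, (g ω).trace ∂μ = ∫ ω, ∑ i, ∑ j, X'' ω i j * A⁻¹ j i ∂μ := by
          refine integral_congr_ae (Filter.Eventually.of_forall fun ω => ?_)
          exact htre (X'' ω)
      _ = ∑ i, ∑ j, (∫ ω, X'' ω i j ∂μ) * A⁻¹ j i := by
          rw [integral_finset_sum _ fun i _ =>
            integrable_finset_sum _ fun j _ => (hXint'' i j).mul_const _]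
          refine Finset.sum_congr rfl fun i _ => ?_
          rw [integral_finset_sum _ fun j _ => (hXint'' i j).mul_const _]
          exact Finset.sum_congr rfl fun j _ => integral_mul_const _ _
      _ = (matExpect μ X * A⁻¹).trace := by
          simp only [hXe]
          simp [matExpect, Matrix.trace, Matrix.diag, Matrix.mul_apply]
  have hTnn : 0 ≤ (matExpect μ X * A⁻¹).trace := by
    rw [← hT]
    exact integral_nonneg fun ω => psd_trace_nonneg (hgpsd ω)
  -- reduce the event
  have hμE : μ {ω | ¬ LoewnerLE (X ω) (sA * U ω * sA)}
      = μ {ω | ¬ LoewnerLE (g ω) (U ω)} := by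
    apply measure_congr
    rw [Filter.eventuallyEq_set]
    filter_upwards [hXX''] with ω hω
    change (¬ LoewnerLE (X ω) (sA * U ω * sA)) ↔ ¬ LoewnerLE (g ω) (U ω)
    rw [hω]
    exact not_congr (conj_loewner hsA_herm hS_herm h1 h2)
  rw [hμE]
  -- ε-approximation
  refine ENNReal.le_of_forall_pos_le_add fun ε hε _ => ?_
  set δ : ℝ := (ε : ℝ) / ((d : ℝ) * ((d : ℝ) + 1) + 1) with hδ_def
  have hden : (0:ℝ) < (d : ℝ) * ((d : ℝ) + 1) + 1 := by positivity
  have hδpos : 0 < δ := div_pos (by exact_mod_cast hε) hden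
  set c : ℝ := (d : ℝ) * ((d : ℝ) + 1) * δ with hc_def
  have hcnn : 0 ≤ c := by positivity
  have hcε : c ≤ (ε : ℝ) := by
    rw [hc_def, hδ_def]
    rw [div_eq_mul_inv, ← mul_assoc]
    rw [mul_comm ((d : ℝ) * ((d : ℝ) + 1)) (ε : ℝ), mul_assoc]
    nth_rewrite 2 [← mul_one (ε : ℝ)]
    refine mul_le_mul_of_nonneg_left ?_ ε.coe_nonneg
    rw [mul_inv_le_iff₀ hden, one_mul]
    linarith
  -- the grid partition
  let r : Matrix (Fin d) (Fin d) ℝ → (Fin d → Fin d → ℤ) :=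
    fun M i j => ⌊(S * M * S) i j / δ⌋
  have hrm : Measurable r := by
    apply measurable_pi_lambda; intro i; apply measurable_pi_lambda; intro j
    have hc : Continuous (fun M : Matrix (Fin d) (Fin d) ℝ => (S * M * S) i j) :=
      ((continuous_const.matrix_mul continuous_id).matrix_mul continuous_const).matrix_elem i j
    exact (hc.measurable.div_const δ).floor
  let k : Ω → (Fin d → Fin d → ℤ) := fun ω => r (X'' ω)
  have hkm : Measurable k := hrm.comp hX''m
  let C : (Fin d → Fin d → ℤ) → Set Ω := fun z => k ⁻¹' {z}
  have hgclose : ∀ z, ∀ ω ∈ C z, ∀ ω' ∈ C z, ∀ i j, |g ω i j - g ω' i j| ≤ δ := by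
    intro z ω hω ω' hω' i j
    have hz : k ω = k ω' := by
      rw [Set.mem_preimage, Set.mem_singleton_iff] at hω hω'
      rw [hω, hω']
    have hz2 : ⌊g ω i j / δ⌋ = ⌊g ω' i j / δ⌋ := by
      have := congrFun (congrFun hz i) j
      exact this
    exact abs_sub_le_of_floor_div_eq hδpos hz2
  let Y : (Fin d → Fin d → ℤ) → Matrix (Fin d) (Fin d) ℝ := fun z =>
    if h : (C z).Nonempty then g h.some + ((d : ℝ) * δ) • 1 else 1
  have hYpsd : ∀ z, (Y z).PosSemidef := by
    intro z
    by_cases h : (C z).Nonempty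
    · simp only [Y, dif_pos h]
      exact (hgpsd _).add (smul_one_posSemidef (by positivity))
    · simp only [Y, dif_neg h]
      exact Matrix.PosSemidef.one
  have hkey : ∀ ω, LoewnerLE (g ω) (Y (k ω)) ∧ (Y (k ω)).trace ≤ (g ω).trace + c := by
    intro ω
    have hωC : ω ∈ C (k ω) := rfl
    have hne : (C (k ω)).Nonempty := ⟨ω, hωC⟩
    have hY : Y (k ω) = g hne.some + ((d : ℝ) * δ) • 1 := dif_pos hne
    have hclose := hgclose (k ω) ω hωC hne.some hne.some_mem
    constructor
    · rw [hY]
      exact loewner_of_close hδpos.le (hgpsd ω).1 (hgpsd hne.some).1 hclose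
    · rw [hY]
      have htr1 : (g hne.some + ((d : ℝ) * δ) • 1).trace
          = (g hne.some).trace + (d : ℝ) * δ * (d : ℝ) := by
        rw [Matrix.trace_add, Matrix.trace_smul, Matrix.trace_one]
        simp [smul_eq_mul]
      rw [htr1]
      have htr2 : (g hne.some).trace ≤ (g ω).trace + (d : ℝ) * δ := by
        have hsum : ∀ i : Fin d, g hne.some i i ≤ g ω i i + δ := by
          intro i
          have := hclose i i
          rw [abs_sub_comm] at this
          linarith [abs_le.mp this]
        calc (g hne.some).trace = ∑ i, g hne.some i i := rfl
          _ ≤ ∑ i, (g ω i i + δ) := Finset.sum_le_sum fun i _ => hsum i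
          _ = (g ω).trace + (d : ℝ) * δ := by
            rw [Finset.sum_add_distrib]
            simp [Matrix.trace, Matrix.diag, mul_comm]
      rw [hc_def]
      nlinarith [hδpos.le]
  -- events
  let B : (Fin d → Fin d → ℤ) → Set (Matrix (Fin d) (Fin d) ℝ) := fun z => r ⁻¹' {z}
  have hBm : ∀ z, MeasurableSet (B z) := fun z => hrm (measurableSet_singleton z)
  let Dset : (Fin d → Fin d → ℤ) → Set (Matrix (Fin d) (Fin d) ℝ) :=
    fun z => {M | ¬ LoewnerLE (Y z) M}
  have hDm : ∀ z, MeasurableSet (Dset z) := fun z => notLoewner_measurableSet (Y z)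
  have hcover : {ω | ¬ LoewnerLE (g ω) (U ω)} ⊆ ⋃ z, (C z ∩ U ⁻¹' (Dset z)) := by
    intro ω hω
    refine Set.mem_iUnion.mpr ⟨k ω, rfl, fun hcon => ?_⟩
    exact hω (loewner_trans (hkey ω).1 hcon)
  calc μ {ω | ¬ LoewnerLE (g ω) (U ω)}
      ≤ μ (⋃ z, (C z ∩ U ⁻¹' (Dset z))) := measure_mono hcover
    _ ≤ ∑' z, μ (C z ∩ U ⁻¹' (Dset z)) := measure_iUnion_le _
    _ ≤ ∑' z, ENNReal.ofReal ((Y z).trace) * μ (C z) := by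
        refine ENNReal.tsum_le_tsum fun z => ?_
        have e1 : μ (C z ∩ U ⁻¹' (Dset z)) = μ (X ⁻¹' (B z) ∩ U ⁻¹' (Dset z)) := by
          apply measure_congr
          rw [Filter.eventuallyEq_set]
          filter_upwards [hXX''] with ω hω
          simp only [Set.mem_inter_iff, Set.mem_preimage, C, k, B]
          rw [hω]
        have e2 : μ (X ⁻¹' (B z)) = μ (C z) := by
          apply measure_congr
          rw [Filter.eventuallyEq_set]
          filter_upwards [hXX''] with ω hω
          simp only [Set.mem_preimage, C, k, B, Set.mem_singleton_iff]
          rw [hω]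
        rw [e1, hindep.measure_inter_preimage_eq_mul _ _ (hBm z) (hDm z), e2, mul_comm]
        refine mul_le_mul_left ?_ _
        exact hU (Y z) (hYpsd z)
    _ = ∫⁻ ω, ENNReal.ofReal ((Y (k ω)).trace) ∂μ := by
        have hFm : Measurable (fun z => ENNReal.ofReal ((Y z).trace)) :=
          measurable_of_countable _
        rw [← lintegral_map hFm hkm, lintegral_countable']
        refine tsum_congr fun z => ?_
        rw [Measure.map_apply hkm (measurableSet_singleton z), mul_comm]
    _ ≤ ∫⁻ ω, ENNReal.ofReal ((g ω).trace + c) ∂μ :=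
        lintegral_mono fun ω => ENNReal.ofReal_le_ofReal (hkey ω).2
    _ = ENNReal.ofReal (∫ ω, ((g ω).trace + c) ∂μ) := by
        have hint : Integrable (fun ω => (g ω).trace + c) μ := hInt_tr.add (integrable_const c)
        exact (ofReal_integral_eq_lintegral_ofReal hint
          (Filter.Eventually.of_forall fun ω =>
            add_nonneg (psd_trace_nonneg (hgpsd ω)) hcnn)).symm
    _ = ENNReal.ofReal ((matExpect μ X * A⁻¹).trace + c) := by
        rw [integral_add hInt_tr (integrable_const c), integral_const, probReal_univ,
          one_smul, hT]
    _ ≤ ENNReal.ofReal ((matExpect μ X * A⁻¹).trace) + ε := by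
        refine (ENNReal.ofReal_add_le).trans ?_
        refine add_le_add_right ?_ _
        rw [← ENNReal.ofReal_coe_nnreal]
        exact ENNReal.ofReal_le_ofReal hcε

end
end

section
/- Let X be a random d×d real symmetric matrix with square-integrable entries, mean E[X], and variance Var(X) = E[(X − E[X])²]. Let U be a trace super-uniform random d×d positive semidefinite matrix independent of X, and let A be a d×d symmetric positive definite matrix. Then P( abs(X − E[X]) ⋠ (A U A)^{1/2} ) ≤ tr( Var(X) · A⁻² ). -/
open MeasureTheory ProbabilityTheory Matrix Filter

noncomputable section

section aux
variable {d : ℕ}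

lemma matCFC_of_hermitian {f : ℝ → ℝ} {X : Matrix (Fin d) (Fin d) ℝ} (hX : X.IsHermitian) :
    matCFC f X = (hX.eigenvectorUnitary : Matrix (Fin d) (Fin d) ℝ) *
      Matrix.diagonal (fun i => f (hX.eigenvalues i)) *
      star (hX.eigenvectorUnitary : Matrix (Fin d) (Fin d) ℝ) := dif_pos hX

lemma matCFC_mul {f g : ℝ → ℝ} {X : Matrix (Fin d) (Fin d) ℝ} (hX : X.IsHermitian) :
    matCFC f X * matCFC g X = matCFC (fun x => f x * g x) X := by
  rw [matCFC_of_hermitian hX, matCFC_of_hermitian hX, matCFC_of_hermitian hX]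
  set u := (hX.eigenvectorUnitary : Matrix (Fin d) (Fin d) ℝ)
  have hu : star u * u = 1 := Unitary.coe_star_mul_self _
  calc u * diagonal (fun i => f (hX.eigenvalues i)) * star u *
        (u * diagonal (fun i => g (hX.eigenvalues i)) * star u)
      = u * (diagonal (fun i => f (hX.eigenvalues i)) * ((star u * u) *
          diagonal (fun i => g (hX.eigenvalues i)))) * star u := by
        simp only [Matrix.mul_assoc]
    _ = u * diagonal (fun i => f (hX.eigenvalues i) * g (hX.eigenvalues i)) * star u := by
        rw [hu, Matrix.one_mul, diagonal_mul_diagonal, Matrix.mul_assoc]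

lemma matCFC_id {X : Matrix (Fin d) (Fin d) ℝ} (hX : X.IsHermitian) :
    matCFC (fun x => x) X = X := by
  rw [matCFC_of_hermitian hX]
  have := hX.spectral_theorem
  simpa using this.symm

lemma matCFC_posSemidef {f : ℝ → ℝ} {X : Matrix (Fin d) (Fin d) ℝ} (hX : X.IsHermitian)
    (hf : ∀ x, 0 ≤ f x) : (matCFC f X).PosSemidef := by
  rw [matCFC_of_hermitian hX]
  have : (diagonal (fun i => f (hX.eigenvalues i))).PosSemidef :=
    posSemidef_diagonal_iff.mpr fun i => hf _
  simpa [star_eq_conjTranspose] using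
    this.mul_mul_conjTranspose_same (hX.eigenvectorUnitary : Matrix (Fin d) (Fin d) ℝ)

lemma matAbs_posSemidef {X : Matrix (Fin d) (Fin d) ℝ} (hX : X.IsHermitian) :
    (matAbs X).PosSemidef := matCFC_posSemidef hX fun x => abs_nonneg x

lemma matAbs_mul_self {X : Matrix (Fin d) (Fin d) ℝ} (hX : X.IsHermitian) :
    matAbs X * matAbs X = X * X := by
  rw [matAbs, matCFC_mul hX]
  have h1 : (fun x : ℝ => |x| * |x|) = fun x => x * x := by
    funext x; rw [abs_mul_abs_self]
  rw [h1, ← matCFC_mul hX (f := fun x => x) (g := fun x => x), matCFC_id hX]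

lemma matSqrt_posSemidef {X : Matrix (Fin d) (Fin d) ℝ} (hX : X.PosSemidef) :
    (matSqrt X).PosSemidef := matCFC_posSemidef hX.1 fun x => Real.sqrt_nonneg x

lemma matSqrt_mul_self {X : Matrix (Fin d) (Fin d) ℝ} (hX : X.PosSemidef) :
    matSqrt X * matSqrt X = X := by
  rw [matSqrt, matCFC_mul hX.1]
  conv_rhs => rw [← matCFC_id hX.1]
  rw [matCFC_of_hermitian hX.1, matCFC_of_hermitian hX.1]
  simp only [Real.mul_self_sqrt, hX.eigenvalues_nonneg]

lemma sq_cmp {B C : Matrix (Fin d) (Fin d) ℝ} (hB : B.PosSemidef) (hC : C.PosSemidef)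
    (h : (C * C - B * B).PosSemidef) : (C - B).PosSemidef := by
  have hH : (C - B).IsHermitian := hC.1.sub hB.1
  by_contra hcon
  have : ¬ ∀ i, 0 ≤ hH.eigenvalues i := fun hall => hcon (hH.posSemidef_iff_eigenvalues_nonneg.mpr hall)
  push_neg at this
  obtain ⟨i, hi⟩ := this
  set lam := hH.eigenvalues i with hlam
  set v : Fin d → ℝ := ⇑(hH.eigenvectorBasis i) with hv
  have hev : (C - B) *ᵥ v = lam • v := hH.mulVec_eigenvectorBasis i
  have hvne : v ≠ 0 := by
    have := hH.eigenvectorBasis.orthonormal.ne_zero i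
    intro h0
    exact this (by ext j; exact congrFun h0 j)
  have hT : (C - B)ᵀ = C - B := by
    have := hH
    rwa [Matrix.IsHermitian, conjTranspose_eq_transpose_of_trivial] at this
  have hvm : v ᵥ* (C - B) = lam • v := by
    rw [← hT, vecMul_transpose, hev]
  set n := v ⬝ᵥ v with hn
  set a := v ⬝ᵥ (B *ᵥ v) with ha
  set c := v ⬝ᵥ (C *ᵥ v) with hc
  have hnn : 0 ≤ n := by
    rw [hn, dotProduct]; exact Finset.sum_nonneg fun j _ => mul_self_nonneg _
  have hn0 : 0 < n := by
    rcases hnn.lt_or_eq with h' | h'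
    · exact h'
    · exact absurd ((dotProduct_self_eq_zero).mp h'.symm) hvne
  have ha0 : 0 ≤ a := by simpa using hB.dotProduct_mulVec_nonneg v
  have hc0 : 0 ≤ c := by simpa using hC.dotProduct_mulVec_nonneg v
  have hca : c - a = lam * n := by
    have : v ⬝ᵥ ((C - B) *ᵥ v) = lam * n := by rw [hev, dotProduct_smul]; simp [hn, smul_eq_mul]
    rw [← this, sub_mulVec, dotProduct_sub]
  have hkey : 0 ≤ lam * (c + a) := by
    have h2 := h.dotProduct_mulVec_nonneg v
    have hre : v ⬝ᵥ ((C * C - B * B) *ᵥ v) = lam * (c + a) := by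
      have hdecomp : C * C - B * B = C * (C - B) + (C - B) * B := by noncomm_ring
      have t1 : v ⬝ᵥ (C * (C - B)) *ᵥ v = lam * c := by
        rw [← mulVec_mulVec, hev, mulVec_smul, dotProduct_smul]; simp [smul_eq_mul, hc]
      have t2 : v ⬝ᵥ ((C - B) * B) *ᵥ v = lam * a := by
        rw [← mulVec_mulVec, dotProduct_mulVec, hvm, smul_dotProduct]; simp [smul_eq_mul, ha]
      rw [hdecomp, add_mulVec, dotProduct_add, t1, t2]; ring
    simpa [hre] using h2
  nlinarith [mul_pos (neg_pos.mpr hi) hn0]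

lemma det_step {Z u A : Matrix (Fin d) (Fin d) ℝ} (hZ : Z.IsHermitian) (hA : A.PosDef)
    (h : (u - (A⁻¹ * Z) * (A⁻¹ * Z)ᴴ).PosSemidef) :
    (matSqrt (A * u * A) - matAbs Z).PosSemidef := by
  have hAH : Aᴴ = A := hA.1
  have hdet : IsUnit A.det := hA.det_pos.ne'.isUnit
  have hAiH : (A⁻¹).IsHermitian := hA.1.inv
  have hW : (A⁻¹ * Z) * (A⁻¹ * Z)ᴴ = A⁻¹ * (Z * Z) * A⁻¹ := by
    rw [conjTranspose_mul, hZ.eq, hAiH.eq]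
    noncomm_ring
  have hu : u.PosSemidef := by
    have := h.add (Matrix.posSemidef_self_mul_conjTranspose (A⁻¹ * Z))
    simpa using this
  have hAuA : (A * u * A).PosSemidef := by
    have := hu.mul_mul_conjTranspose_same A
    rwa [hAH] at this
  have hconj : (A * (u - (A⁻¹ * Z) * (A⁻¹ * Z)ᴴ) * A).PosSemidef := by
    have := h.mul_mul_conjTranspose_same A
    rwa [hAH] at this
  have hAWA : A * ((A⁻¹ * Z) * (A⁻¹ * Z)ᴴ) * A = Z * Z := by
    rw [hW]
    calc A * (A⁻¹ * (Z * Z) * A⁻¹) * A = (A * A⁻¹) * (Z * Z) * (A⁻¹ * A) := by noncomm_ring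
      _ = Z * Z := by rw [mul_nonsing_inv _ hdet, nonsing_inv_mul _ hdet, Matrix.one_mul,
            Matrix.mul_one]
  have hsq : (matSqrt (A * u * A) * matSqrt (A * u * A) - matAbs Z * matAbs Z).PosSemidef := by
    rw [matSqrt_mul_self hAuA, matAbs_mul_self hZ]
    have : A * (u - (A⁻¹ * Z) * (A⁻¹ * Z)ᴴ) * A = A * u * A - Z * Z := by
      rw [Matrix.mul_sub, Matrix.sub_mul, hAWA]
    rwa [this] at hconj
  exact sq_cmp (matAbs_posSemidef hZ) (matSqrt_posSemidef hAuA) hsq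


lemma measurable_entry (i j : Fin d) : Measurable fun m : Matrix (Fin d) (Fin d) ℝ => m i j :=
  (measurable_pi_apply j).comp (measurable_pi_apply i)

lemma psd_iff_rat (m : Matrix (Fin d) (Fin d) ℝ) :
    m.PosSemidef ↔ ((∀ i j, m i j = m j i) ∧
      ∀ q : Fin d → ℚ, 0 ≤ (fun i => (q i : ℝ)) ⬝ᵥ m *ᵥ (fun i => (q i : ℝ))) := by
  constructor
  · intro hm
    refine ⟨fun i j => ?_, fun q => by simpa using hm.dotProduct_mulVec_nonneg (fun i => (q i : ℝ))⟩
    conv_lhs => rw [← hm.1]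
    simp [conjTranspose_apply]
  · rintro ⟨hsym, hq⟩
    refine posSemidef_iff_dotProduct_mulVec.mpr ⟨?_, ?_⟩
    · ext i j
      simp [conjTranspose_apply, hsym i j]
    · intro v
      have hcont : Continuous fun v : Fin d → ℝ => v ⬝ᵥ m *ᵥ v := by
        simp only [dotProduct, Matrix.mulVec]
        fun_prop
      have hK : IsClosed {v : Fin d → ℝ | 0 ≤ v ⬝ᵥ m *ᵥ v} :=
        isClosed_le continuous_const hcont
      have hdense : Dense (Set.pi Set.univ fun _ : Fin d => Set.range ((↑) : ℚ → ℝ)) :=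
        dense_pi Set.univ fun i _ => Rat.denseRange_cast
      have hsub : (Set.pi Set.univ fun _ : Fin d => Set.range ((↑) : ℚ → ℝ)) ⊆
          {v : Fin d → ℝ | 0 ≤ v ⬝ᵥ m *ᵥ v} := by
        intro v hv
        choose q hqv using fun i => hv i (Set.mem_univ i)
        have : v = fun i => (q i : ℝ) := by funext i; exact (hqv i).symm
        rw [Set.mem_setOf_eq, this]
        exact hq q
      have := closure_minimal hsub hK
      rw [hdense.closure_eq] at this
      simpa using this (Set.mem_univ v)

lemma measurableSet_psd : MeasurableSet {m : Matrix (Fin d) (Fin d) ℝ | m.PosSemidef} := by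
  have : {m : Matrix (Fin d) (Fin d) ℝ | m.PosSemidef} =
      (⋂ i, ⋂ j, {m : Matrix (Fin d) (Fin d) ℝ | m i j = m j i}) ∩
      (⋂ q : Fin d → ℚ, {m : Matrix (Fin d) (Fin d) ℝ |
        0 ≤ (fun i => (q i : ℝ)) ⬝ᵥ m *ᵥ (fun i => (q i : ℝ))}) := by
    ext m
    simp only [psd_iff_rat, Set.mem_inter_iff, Set.mem_iInter, Set.mem_setOf_eq]
  rw [this]
  refine MeasurableSet.inter ?_ ?_
  · exact MeasurableSet.iInter fun i => MeasurableSet.iInter fun j =>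
      measurableSet_eq_fun (measurable_entry i j) (measurable_entry j i)
  · refine MeasurableSet.iInter fun q => ?_
    have : Measurable fun m : Matrix (Fin d) (Fin d) ℝ =>
        (fun i => (q i : ℝ)) ⬝ᵥ m *ᵥ (fun i => (q i : ℝ)) := by
      simp only [dotProduct, Matrix.mulVec]
      exact Finset.measurable_sum _ fun i _ => (measurable_const.mul
        (Finset.measurable_sum _ fun j _ => (measurable_entry i j).mul measurable_const))
    exact measurableSet_le measurable_const this

lemma Measurable.matEntry {α} [MeasurableSpace α] {f : α → Matrix (Fin d) (Fin d) ℝ}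
    (hf : Measurable f) (i j : Fin d) : Measurable fun a => f a i j :=
  (measurable_entry i j).comp hf

lemma Measurable.matMul {α} [MeasurableSpace α] {f g : α → Matrix (Fin d) (Fin d) ℝ}
    (hf : Measurable f) (hg : Measurable g) : Measurable fun a => f a * g a := by
  refine measurable_pi_lambda _ fun i => measurable_pi_lambda _ fun j => ?_
  simp only [Matrix.mul_apply]
  exact Finset.measurable_sum _ fun k _ => (hf.matEntry i k).mul (hg.matEntry k j)

lemma Measurable.matSub {α} [MeasurableSpace α] {f g : α → Matrix (Fin d) (Fin d) ℝ}
    (hf : Measurable f) (hg : Measurable g) : Measurable fun a => f a - g a := by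
  refine measurable_pi_lambda _ fun i => measurable_pi_lambda _ fun j => ?_
  exact (hf.matEntry i j).sub (hg.matEntry i j)

lemma Measurable.matCT {α} [MeasurableSpace α] {f : α → Matrix (Fin d) (Fin d) ℝ}
    (hf : Measurable f) : Measurable fun a => (f a)ᴴ := by
  refine measurable_pi_lambda _ fun i => measurable_pi_lambda _ fun j => ?_
  simpa [conjTranspose_apply] using hf.matEntry j i

lemma measurable_matTrace : Measurable fun m : Matrix (Fin d) (Fin d) ℝ => m.trace :=
  Finset.measurable_sum _ fun i _ => measurable_entry i i

section grid
variable {δ : ℝ} (hδ : 0 < δ)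

def gridY (d : ℕ) (δ : ℝ) (z : Fin d → Fin d → ℤ) : Matrix (Fin d) (Fin d) ℝ :=
  Matrix.of (fun i j => (((z i j : ℝ) * δ) + ((z j i : ℝ) * δ))/2) +
    ((d : ℝ) * δ) • (1 : Matrix (Fin d) (Fin d) ℝ)

def gridS (d : ℕ) (δ : ℝ) (z : Fin d → Fin d → ℤ) : Set (Matrix (Fin d) (Fin d) ℝ) :=
  {x | ∀ i j, (z i j : ℝ) * δ ≤ x i j ∧ x i j < ((z i j : ℝ) + 1) * δ}

lemma gridS_measurableSet (z : Fin d → Fin d → ℤ) : MeasurableSet (gridS d δ z) := by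
  have : gridS d δ z = ⋂ i, ⋂ j, (fun m : Matrix (Fin d) (Fin d) ℝ => m i j) ⁻¹'
      (Set.Ico ((z i j : ℝ) * δ) (((z i j : ℝ) + 1) * δ)) := by
    ext m; simp [gridS, Set.mem_iInter, Set.mem_Ico]
  rw [this]
  exact MeasurableSet.iInter fun i => MeasurableSet.iInter fun j =>
    (measurable_entry i j) measurableSet_Ico

lemma gridS_mem (hδ : 0 < δ) (x : Matrix (Fin d) (Fin d) ℝ) :
    x ∈ gridS d δ (fun i j => ⌊x i j / δ⌋) := by
  intro i j
  constructor
  · have h := Int.floor_le (x i j / δ)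
    calc (⌊x i j / δ⌋ : ℝ) * δ ≤ (x i j / δ) * δ :=
          mul_le_mul_of_nonneg_right h (le_of_lt hδ)
    _ = x i j := div_mul_cancel₀ _ (ne_of_gt hδ)
  · have h := Int.lt_floor_add_one (x i j / δ)
    calc x i j = (x i j / δ) * δ := (div_mul_cancel₀ _ (ne_of_gt hδ)).symm
    _ < ((⌊x i j / δ⌋ : ℝ) + 1) * δ := mul_lt_mul_of_pos_right h hδ

lemma gridS_disjoint : Pairwise (Function.onFun Disjoint (gridS d δ)) := by
  intro z z' hne
  rw [Function.onFun, Set.disjoint_left]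
  intro x hx hx'
  apply hne
  funext i j
  have h1 := hx i j
  have h2 := hx' i j
  have : (z i j : ℝ) = (z' i j : ℝ) := by
    have a1 : (z i j : ℝ) < (z' i j : ℝ) + 1 := by nlinarith [h1.1, h2.2]
    have a2 : (z' i j : ℝ) < (z i j : ℝ) + 1 := by nlinarith [h2.1, h1.2]
    have b1 : z i j < z' i j + 1 := by exact_mod_cast (by push_cast; linarith : (z i j:ℝ) < ((z' i j + 1 : ℤ) : ℝ))
    have b2 : z' i j < z i j + 1 := by exact_mod_cast (by push_cast; linarith : (z' i j:ℝ) < ((z i j + 1 : ℤ) : ℝ))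
    have : z i j = z' i j := by omega
    exact_mod_cast this
  exact_mod_cast this

lemma grid_key (hδ : 0 < δ) {z : Fin d → Fin d → ℤ} {x : Matrix (Fin d) (Fin d) ℝ} (hx : x.PosSemidef)
    (hxS : x ∈ gridS d δ z) :
    (gridY d δ z - x).PosSemidef ∧ (gridY d δ z).trace ≤ x.trace + (d : ℝ) * d * δ := by
  have hxsym : ∀ i j, x i j = x j i := by
    intro i j
    conv_lhs => rw [← hx.1]
    simp [conjTranspose_apply]
  set N : Fin d → Fin d → ℝ := fun i j => (((z i j : ℝ) * δ) + ((z j i : ℝ) * δ))/2 with hN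
  have hNle : ∀ i j, |N i j - x i j| ≤ δ := by
    intro i j
    have h1 := hxS i j
    have h2 := hxS j i
    have hs := hxsym i j
    have hNd : N i j = (((z i j : ℝ) * δ) + ((z j i : ℝ) * δ))/2 := rfl
    rw [abs_le, hNd]
    constructor
    · nlinarith [h1.1, h1.2, h2.1, h2.2]
    · nlinarith [h1.1, h1.2, h2.1, h2.2]
  constructor
  · refine posSemidef_iff_dotProduct_mulVec.mpr ⟨?_, ?_⟩
    · ext i j
      simp only [conjTranspose_apply, RCLike.star_def, starRingEnd_apply, star_trivial,
        Matrix.sub_apply, gridY, Matrix.add_apply, Matrix.of_apply, Matrix.smul_apply,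
        Matrix.one_apply, smul_eq_mul]
      rw [hxsym j i]
      have : (if j = i then (1:ℝ) else 0) = (if i = j then (1:ℝ) else 0) := by
        by_cases h : i = j
        · simp [h]
        · rw [if_neg h, if_neg (fun hc => h hc.symm)]
      rw [this]
      ring
    · intro v
      have hsplit : gridY d δ z - x = (Matrix.of N - x) + ((d:ℝ)*δ) • (1 : Matrix (Fin d) (Fin d) ℝ) := by
        unfold gridY
        ext i j
        simp only [Matrix.sub_apply, Matrix.add_apply, Matrix.of_apply, Matrix.smul_apply,
          Matrix.one_apply, smul_eq_mul, hN]
        ring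
      have h1 : v ⬝ᵥ ((((d:ℝ)*δ) • (1 : Matrix (Fin d) (Fin d) ℝ)) *ᵥ v) = (d:ℝ)*δ*(∑ i, v i ^ 2) := by
        rw [smul_mulVec, one_mulVec, dotProduct_smul]
        simp only [smul_eq_mul, dotProduct]
        congr 1
        exact Finset.sum_congr rfl fun i _ => by ring
      have h2 : v ⬝ᵥ ((Matrix.of N - x) *ᵥ v) = ∑ i, ∑ j, v i * ((N i j - x i j) * v j) := by
        simp [dotProduct, Matrix.mulVec, Matrix.sub_apply, Finset.mul_sum]
      have hb : |∑ i, ∑ j, v i * ((N i j - x i j) * v j)| ≤ δ * ((∑ i, |v i|) * (∑ i, |v i|)) := by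
        have step1 : |∑ i, ∑ j, v i * ((N i j - x i j) * v j)| ≤
            ∑ i, ∑ j, (|v i| * (δ * |v j|)) := by
          refine (Finset.abs_sum_le_sum_abs _ _).trans (Finset.sum_le_sum fun i _ => ?_)
          refine (Finset.abs_sum_le_sum_abs _ _).trans (Finset.sum_le_sum fun j _ => ?_)
          rw [abs_mul, abs_mul]
          have := hNle i j
          have hvi : (0:ℝ) ≤ |v i| := abs_nonneg _
          have hvj : (0:ℝ) ≤ |v j| := abs_nonneg _
          exact mul_le_mul_of_nonneg_left (mul_le_mul_of_nonneg_right this hvj) hvi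
        refine step1.trans_eq ?_
        rw [Finset.sum_mul_sum]
        rw [Finset.mul_sum]
        refine Finset.sum_congr rfl fun i _ => ?_
        rw [Finset.mul_sum]
        exact Finset.sum_congr rfl fun j _ => by ring
      have hcs : (∑ i, |v i|) * (∑ i, |v i|) ≤ (d:ℝ) * ∑ i, v i ^ 2 := by
        have := sq_sum_le_card_mul_sum_sq (s := (Finset.univ : Finset (Fin d))) (f := fun i => |v i|)
        simp only [Finset.card_univ, Fintype.card_fin, sq_abs] at this
        calc (∑ i, |v i|) * (∑ i, |v i|) = (∑ i, |v i|) ^ 2 := by ring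
          _ ≤ (d : ℝ) * ∑ i, v i ^ 2 := by exact_mod_cast this
      have hδ0 : (0:ℝ) ≤ δ := le_of_lt hδ
      have hdd : (0:ℝ) ≤ (d:ℝ) := Nat.cast_nonneg d
      simp only [star_trivial]
      rw [hsplit, add_mulVec, dotProduct_add, h1, h2]
      have hlow : -(δ * ((d:ℝ) * ∑ i, v i ^ 2)) ≤ ∑ i, ∑ j, v i * ((N i j - x i j) * v j) := by
        have := neg_abs_le (∑ i, ∑ j, v i * ((N i j - x i j) * v j))
        have h3 : δ * ((∑ i, |v i|) * (∑ i, |v i|)) ≤ δ * ((d:ℝ) * ∑ i, v i ^ 2) :=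
          mul_le_mul_of_nonneg_left hcs hδ0
        linarith [hb]
      linarith
  · have hdiag : ∀ i : Fin d, gridY d δ z i i = (z i i : ℝ) * δ + (d:ℝ)*δ := by
      intro i
      simp only [gridY, Matrix.add_apply, Matrix.of_apply, Matrix.smul_apply, Matrix.one_apply,
        if_pos rfl, smul_eq_mul, if_true]
      ring
    have htr : (gridY d δ z).trace = (∑ i, (z i i : ℝ) * δ) + (d:ℝ)*((d:ℝ)*δ) := by
      rw [Matrix.trace]
      simp only [Matrix.diag_apply, hdiag, Finset.sum_add_distrib, Finset.sum_const,
        Finset.card_univ, Fintype.card_fin, nsmul_eq_mul]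
    have hxt : x.trace = ∑ i, x i i := rfl
    rw [htr, hxt]
    have : (∑ i, (z i i : ℝ) * δ) ≤ ∑ i, x i i :=
      Finset.sum_le_sum fun i _ => (hxS i i).1
    linarith
end grid

lemma core {Ω : Type*} {m0 : MeasurableSpace Ω} (μ : Measure Ω) [IsProbabilityMeasure μ]
    {d : ℕ} (U W : Ω → Matrix (Fin d) (Fin d) ℝ)
    (hU : TraceSuperUniform μ U) (hW : ∀ ω, (W ω).PosSemidef) (hWm : Measurable W)
    (hindep : IndepFun W U μ) :
    μ {ω | ¬ LoewnerLE (W ω) (U ω)} ≤ ∫⁻ ω, ENNReal.ofReal (W ω).trace ∂μ := by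
  set L := ∫⁻ ω, ENNReal.ofReal (W ω).trace ∂μ with hL
  refine ENNReal.le_of_forall_pos_le_add fun ε hε hLtop => ?_
  set δ : ℝ := (ε : ℝ) / ((d:ℝ) * d + 1) with hδdef
  have hd1 : (0:ℝ) < (d:ℝ) * d + 1 := by positivity
  have hδ : 0 < δ := div_pos (by exact_mod_cast hε) hd1
  have hδle : ENNReal.ofReal ((d:ℝ) * d * δ) ≤ (ε : ENNReal) := by
    have hεnn : (0:ℝ) ≤ (ε:ℝ) := ε.coe_nonneg
    have h1 : (d:ℝ) * d * δ ≤ (ε:ℝ) := by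
      rw [hδdef, mul_div_assoc', div_le_iff₀ hd1]
      nlinarith
    calc ENNReal.ofReal ((d:ℝ) * d * δ) ≤ ENNReal.ofReal (ε:ℝ) := ENNReal.ofReal_le_ofReal h1
      _ = (ε : ENNReal) := ENNReal.ofReal_coe_nnreal
  set T : (Fin d → Fin d → ℤ) → Set (Matrix (Fin d) (Fin d) ℝ) :=
    fun z => {u | ¬ LoewnerLE (gridY d δ z) u} with hT
  have hTmeas : ∀ z, MeasurableSet (T z) := by
    intro z
    have : T z = ((fun u : Matrix (Fin d) (Fin d) ℝ => u - gridY d δ z) ⁻¹'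
        {m : Matrix (Fin d) (Fin d) ℝ | m.PosSemidef})ᶜ := by
      ext u
      simp [hT, LoewnerLE, Set.mem_preimage]
    rw [this]
    exact ((measurable_id.matSub measurable_const) measurableSet_psd).compl
  have hcover : {ω | ¬ LoewnerLE (W ω) (U ω)} ⊆
      ⋃ z, (W ⁻¹' gridS d δ z ∩ U ⁻¹' T z) := by
    intro ω hω
    refine Set.mem_iUnion.mpr ⟨fun i j => ⌊W ω i j / δ⌋, gridS_mem hδ (W ω), fun hcon => ?_⟩
    apply hω
    have hYW := (grid_key hδ (hW ω) (gridS_mem hδ (W ω))).1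
    have h2 := hcon.add hYW
    rw [sub_add_sub_cancel] at h2
    exact h2
  have hgmeas : Measurable fun ω => ENNReal.ofReal ((W ω).trace + (d:ℝ)*d*δ) :=
    ENNReal.measurable_ofReal.comp ((measurable_matTrace.comp hWm).add measurable_const)
  have huniv : (⋃ z, W ⁻¹' gridS d δ z) = Set.univ := by
    refine Set.eq_univ_of_forall fun ω => Set.mem_iUnion.mpr ?_
    exact ⟨fun i j => ⌊W ω i j / δ⌋, gridS_mem hδ (W ω)⟩
  calc μ {ω | ¬ LoewnerLE (W ω) (U ω)}
      ≤ μ (⋃ z, (W ⁻¹' gridS d δ z ∩ U ⁻¹' T z)) := measure_mono hcover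
    _ ≤ ∑' z, μ (W ⁻¹' gridS d δ z ∩ U ⁻¹' T z) := measure_iUnion_le _
    _ = ∑' z, μ (W ⁻¹' gridS d δ z) * μ (U ⁻¹' T z) :=
        tsum_congr fun z =>
          hindep.measure_inter_preimage_eq_mul _ _ (gridS_measurableSet z) (hTmeas z)
    _ ≤ ∑' z, ∫⁻ ω in W ⁻¹' gridS d δ z, ENNReal.ofReal ((W ω).trace + (d:ℝ)*d*δ) ∂μ := by
        refine ENNReal.tsum_le_tsum fun z => ?_
        rcases Set.eq_empty_or_nonempty (W ⁻¹' gridS d δ z) with hz | hz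
        · rw [hz]; simp
        · obtain ⟨ω0, hω0⟩ := hz
          have hkey := grid_key hδ (hW ω0) hω0
          have hYpsd : (gridY d δ z).PosSemidef := by
            have := hkey.1.add (hW ω0)
            simpa using this
          have hTbound : μ (U ⁻¹' T z) ≤ ENNReal.ofReal (gridY d δ z).trace := hU _ hYpsd
          calc μ (W ⁻¹' gridS d δ z) * μ (U ⁻¹' T z)
              ≤ μ (W ⁻¹' gridS d δ z) * ENNReal.ofReal (gridY d δ z).trace :=
                mul_le_mul_right hTbound _
            _ = ∫⁻ _ in W ⁻¹' gridS d δ z, ENNReal.ofReal (gridY d δ z).trace ∂μ := by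
                rw [setLIntegral_const, mul_comm]
            _ ≤ ∫⁻ ω in W ⁻¹' gridS d δ z, ENNReal.ofReal ((W ω).trace + (d:ℝ)*d*δ) ∂μ := by
                refine setLIntegral_mono hgmeas fun ω hω => ENNReal.ofReal_le_ofReal ?_
                exact (grid_key hδ (hW ω) hω).2
    _ = ∫⁻ ω, ENNReal.ofReal ((W ω).trace + (d:ℝ)*d*δ) ∂μ := by
        rw [← lintegral_iUnion (fun z => hWm (gridS_measurableSet z))
          (fun z z' hne => (gridS_disjoint hne).preimage W) _, huniv, Measure.restrict_univ]
    _ ≤ L + ENNReal.ofReal ((d:ℝ)*d*δ) := by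
        have : ∀ ω, ENNReal.ofReal ((W ω).trace + (d:ℝ)*d*δ) ≤
            ENNReal.ofReal ((W ω).trace) + ENNReal.ofReal ((d:ℝ)*d*δ) := fun ω =>
          ENNReal.ofReal_add_le
        calc ∫⁻ ω, ENNReal.ofReal ((W ω).trace + (d:ℝ)*d*δ) ∂μ
            ≤ ∫⁻ ω, (ENNReal.ofReal ((W ω).trace) + ENNReal.ofReal ((d:ℝ)*d*δ)) ∂μ :=
              lintegral_mono this
          _ = L + ENNReal.ofReal ((d:ℝ)*d*δ) := by
              rw [lintegral_add_right _ measurable_const, lintegral_const, measure_univ, mul_one]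
    _ ≤ L + ε := add_le_add_right hδle L


lemma psd_trace_nonneg_s1 {x : Matrix (Fin d) (Fin d) ℝ} (hx : x.PosSemidef) : 0 ≤ x.trace := by
  refine Finset.sum_nonneg fun i _ => ?_
  have := hx.dotProduct_mulVec_nonneg (Pi.single i 1)
  simpa [Matrix.mulVec_single, single_dotProduct] using this

lemma memL2_mul_integrable {Ω : Type*} {m0 : MeasurableSpace Ω} {μ : Measure Ω}
    {f g : Ω → ℝ} (hf : MemLp f 2 μ) (hg : MemLp g 2 μ) :
    Integrable (fun ω => f ω * g ω) μ := by
  have h1 := (hf.add hg).integrable_sq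
  have h2 := hf.integrable_sq
  have h3 := hg.integrable_sq
  have heq : (fun ω => f ω * g ω) = fun ω => ((f ω + g ω)^2 - f ω^2 - g ω^2)/2 := by
    funext ω; ring
  rw [heq]
  exact ((h1.sub h2).sub h3).div_const 2

end aux

/-- **Uniformly randomized one-matrix Chebyshev inequality.**
For a random symmetric matrix `X` with square-integrable entries, mean `M` and variance
`Var(X) = E[(X - M)²]`, a trace super-uniform random PSD matrix `U` independent of `X`, and
`A ≻ 0`: `P( abs(X - M) ⋠ (A U A)^{1/2} ) ≤ tr( Var(X) · A⁻² )`. -/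
theorem stmt1 {Ω : Type*} {m0 : MeasurableSpace Ω} (μ : Measure Ω) [IsProbabilityMeasure μ]
    {d : ℕ} (X U : Ω → Matrix (Fin d) (Fin d) ℝ)
    (hXsymm : ∀ ω, (X ω).IsHermitian)
    (hXL2 : ∀ i j, MemLp (fun ω => X ω i j) 2 μ)
    (M : Matrix (Fin d) (Fin d) ℝ) (hM : matExpect μ X = M)
    (hUpsd : ∀ ω, (U ω).PosSemidef)
    (hU : TraceSuperUniform μ U)
    (hindep : IndepFun X U μ)
    (A : Matrix (Fin d) (Fin d) ℝ) (hA : A.PosDef) :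
    μ {ω | ¬ LoewnerLE (matAbs (X ω - M)) (matSqrt (A * U ω * A))} ≤
      ENNReal.ofReal
        ((matExpect μ (fun ω => (X ω - M) * (X ω - M)) * (A⁻¹ * A⁻¹)).trace) := by
  classical
  have hMH : M.IsHermitian := by
    rw [← hM]
    ext i j
    simp only [conjTranspose_apply, matExpect, Matrix.of_apply, star_trivial]
    refine integral_congr_ae (Filter.Eventually.of_forall fun ω => ?_)
    have h := congr_fun (congr_fun (hXsymm ω) i) j
    simpa [conjTranspose_apply] using h
  set f : Matrix (Fin d) (Fin d) ℝ → Matrix (Fin d) (Fin d) ℝ :=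
    fun x => (A⁻¹ * (x - M)) * (A⁻¹ * (x - M))ᴴ with hf
  have hfm : Measurable f := by
    have h1 : Measurable fun x : Matrix (Fin d) (Fin d) ℝ => A⁻¹ * (x - M) :=
      measurable_const.matMul (measurable_id.matSub measurable_const)
    exact h1.matMul h1.matCT
  have hfpsd : ∀ x, (f x).PosSemidef := fun x => posSemidef_self_mul_conjTranspose _
  have hAiH : (A⁻¹).IsHermitian := hA.1.inv
  have hfeq : ∀ ω, f (X ω) = A⁻¹ * ((X ω - M) * (X ω - M)) * A⁻¹ := by
    intro ω
    have hZ : (X ω - M).IsHermitian := (hXsymm ω).sub hMH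
    show (A⁻¹ * (X ω - M)) * (A⁻¹ * (X ω - M))ᴴ = _
    rw [conjTranspose_mul, hZ.eq, hAiH.eq]
    noncomm_ring
  set X' : Ω → Matrix (Fin d) (Fin d) ℝ :=
    fun ω => Matrix.of fun i j => ((hXL2 i j).1.mk _) ω with hX'
  have hX'm : Measurable X' := measurable_pi_lambda _ fun i => measurable_pi_lambda _ fun j =>
    (hXL2 i j).1.stronglyMeasurable_mk.measurable
  have hXX' : ∀ᵐ ω ∂μ, X ω = X' ω := by
    have h : ∀ i, ∀ᵐ ω ∂μ, ∀ j, X ω i j = X' ω i j := fun i =>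
      ae_all_iff.mpr fun j => (hXL2 i j).1.ae_eq_mk
    filter_upwards [ae_all_iff.mpr h] with ω hω
    ext i j
    exact hω i j
  set W : Ω → Matrix (Fin d) (Fin d) ℝ := fun ω => f (X' ω) with hWdef
  have hWm : Measurable W := hfm.comp hX'm
  have hWpsd : ∀ ω, (W ω).PosSemidef := fun ω => hfpsd _
  have hindepW : IndepFun W U μ := by
    have h1 : IndepFun X' U μ := hindep.congr hXX' Filter.EventuallyEq.rfl
    exact h1.comp hfm measurable_id
  have hcore := core μ U W hU hWpsd hWm hindepW
  have hsub : {ω | ¬ LoewnerLE (matAbs (X ω - M)) (matSqrt (A * U ω * A))} ⊆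
      {ω | ¬ LoewnerLE (f (X ω)) (U ω)} := by
    intro ω hω hcon
    apply hω
    have hZ : (X ω - M).IsHermitian := (hXsymm ω).sub hMH
    exact det_step hZ hA hcon
  have hcongr : μ {ω | ¬ LoewnerLE (f (X ω)) (U ω)} = μ {ω | ¬ LoewnerLE (W ω) (U ω)} := by
    apply measure_congr
    rw [Filter.eventuallyEq_set]
    filter_upwards [hXX'] with ω hω
    rw [hω]
  have hlint : ∫⁻ ω, ENNReal.ofReal (W ω).trace ∂μ =
      ∫⁻ ω, ENNReal.ofReal (f (X ω)).trace ∂μ :=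
    lintegral_congr_ae (by filter_upwards [hXX'] with ω hω; rw [hω])
  set K : Matrix (Fin d) (Fin d) ℝ := A⁻¹ * A⁻¹ with hK
  have htr : ∀ ω, (f (X ω)).trace = (((X ω - M) * (X ω - M)) * K).trace := by
    intro ω
    rw [hfeq ω, hK, Matrix.trace_mul_cycle A⁻¹ ((X ω - M) * (X ω - M)) A⁻¹,
      Matrix.trace_mul_comm (A⁻¹ * A⁻¹) ((X ω - M) * (X ω - M))]
  have hZL2 : ∀ i j, MemLp (fun ω => X ω i j - M i j) 2 μ := fun i j =>
    (hXL2 i j).sub (memLp_const _)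
  have hFint : ∀ i j, Integrable (fun ω => ((X ω - M) * (X ω - M)) i j) μ := by
    intro i j
    have heq : (fun ω => ((X ω - M) * (X ω - M)) i j) =
        fun ω => ∑ k, (X ω i k - M i k) * (X ω k j - M k j) := by
      funext ω
      simp [Matrix.mul_apply, Matrix.sub_apply]
    rw [heq]
    exact integrable_finset_sum _ fun k _ => memL2_mul_integrable (hZL2 i k) (hZL2 k j)
  have htrexp : (fun ω => (((X ω - M) * (X ω - M)) * K).trace) =
      fun ω => ∑ i, ∑ k, ((X ω - M) * (X ω - M)) i k * K k i := by
    funext ω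
    simp [Matrix.trace, Matrix.diag, Matrix.mul_apply]
  have htrint : Integrable (fun ω => (((X ω - M) * (X ω - M)) * K).trace) μ := by
    rw [htrexp]
    exact integrable_finset_sum _ fun i _ =>
      integrable_finset_sum _ fun k _ => (hFint i k).mul_const _
  have hswap : ∫ ω, (((X ω - M) * (X ω - M)) * K).trace ∂μ =
      ((matExpect μ fun ω => (X ω - M) * (X ω - M)) * K).trace := by
    rw [htrexp]
    rw [integral_finset_sum _ (fun i _ =>
      integrable_finset_sum _ fun k _ => (hFint i k).mul_const _)]
    have : ∀ i : Fin d, ∫ ω, ∑ k, ((X ω - M) * (X ω - M)) i k * K k i ∂μ =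
        ∑ k, (∫ ω, ((X ω - M) * (X ω - M)) i k ∂μ) * K k i := by
      intro i
      rw [integral_finset_sum _ (fun k _ => (hFint i k).mul_const _)]
      exact Finset.sum_congr rfl fun k _ => integral_mul_const _ _
    simp only [this]
    simp [Matrix.trace, Matrix.diag, Matrix.mul_apply, matExpect]
  have htrnn : 0 ≤ᵐ[μ] fun ω => (((X ω - M) * (X ω - M)) * K).trace :=
    Filter.Eventually.of_forall fun ω => by
      show (0:ℝ) ≤ (((X ω - M) * (X ω - M)) * K).trace
      rw [← htr ω]; exact psd_trace_nonneg_s1 (hfpsd (X ω))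
  calc μ {ω | ¬ LoewnerLE (matAbs (X ω - M)) (matSqrt (A * U ω * A))}
      ≤ μ {ω | ¬ LoewnerLE (f (X ω)) (U ω)} := measure_mono hsub
    _ = μ {ω | ¬ LoewnerLE (W ω) (U ω)} := hcongr
    _ ≤ ∫⁻ ω, ENNReal.ofReal (W ω).trace ∂μ := hcore
    _ = ∫⁻ ω, ENNReal.ofReal (f (X ω)).trace ∂μ := hlint
    _ = ∫⁻ ω, ENNReal.ofReal ((((X ω - M) * (X ω - M)) * K).trace) ∂μ :=
        lintegral_congr fun ω => by rw [htr ω]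
    _ = ENNReal.ofReal (∫ ω, (((X ω - M) * (X ω - M)) * K).trace ∂μ) :=
        (ofReal_integral_eq_lintegral_ofReal htrint htrnn).symm
    _ = ENNReal.ofReal ((matExpect μ (fun ω => (X ω - M) * (X ω - M)) * (A⁻¹ * A⁻¹)).trace) := by
        rw [hswap]

end
end

section
/- Let {Yₙ}_{n≥0} be a matrix supermartingale adapted to a filtration {Fₙ} that is almost surely positive semidefinite at every time n, and let A be a d×d symmetric positive definite matrix. Then the time-uniform matrix Ville inequality holds: P( ∃ n ≥ 0 : Yₙ ⋠ A ) ≤ tr( E[Y₀] · A⁻¹ ). -/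
open MeasureTheory ProbabilityTheory Matrix Filter

noncomputable section

open scoped MatrixOrder in
def Matrix.PosSemidef.sqrt {d : ℕ} {M : Matrix (Fin d) (Fin d) ℝ} (_hM : M.PosSemidef) :
    Matrix (Fin d) (Fin d) ℝ := CFC.sqrt M

open scoped MatrixOrder in
lemma Matrix.PosSemidef.posSemidef_sqrt {d : ℕ} {M : Matrix (Fin d) (Fin d) ℝ}
    (hM : M.PosSemidef) : hM.sqrt.PosSemidef :=
  Matrix.nonneg_iff_posSemidef.mp (CFC.sqrt_nonneg M)

open scoped MatrixOrder in
lemma Matrix.PosSemidef.sqrt_mul_self {d : ℕ} {M : Matrix (Fin d) (Fin d) ℝ}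
    (hM : M.PosSemidef) : hM.sqrt * hM.sqrt = M :=
  CFC.sqrt_mul_sqrt_self M (Matrix.nonneg_iff_posSemidef.mpr hM)

section VilleAux
open MeasureTheory ProbabilityTheory Matrix Filter
variable {d : ℕ}

lemma aux_trace_nonneg_of_posSemidef {M : Matrix (Fin d) (Fin d) ℝ} (hM : M.PosSemidef) :
    0 ≤ M.trace := by
  rw [Matrix.trace]
  refine Finset.sum_nonneg fun i _ => ?_
  have := hM.dotProduct_mulVec_nonneg (Pi.single i 1)
  simpa [Matrix.mulVec_single, dotProduct, Pi.single_apply, Finset.sum_ite_eq'] using this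

lemma aux_trace_mul_nonneg {M N : Matrix (Fin d) (Fin d) ℝ} (hM : M.PosSemidef)
    (hN : N.PosSemidef) : 0 ≤ (M * N).trace := by
  have hs := hM.posSemidef_sqrt
  have h1 : M * N = hM.sqrt * (hM.sqrt * N) := by rw [← mul_assoc, hM.sqrt_mul_self]
  rw [h1, Matrix.trace_mul_comm]
  have h2 : (hM.sqrt * N * hM.sqrt).PosSemidef := by
    have h3 := hN.mul_mul_conjTranspose_same hM.sqrt
    rwa [hs.isHermitian.eq] at h3
  calc (0:ℝ) ≤ (hM.sqrt * N * hM.sqrt).trace := aux_trace_nonneg_of_posSemidef h2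
  _ = _ := by rw [mul_assoc]

lemma aux_quadform_le_trace {M : Matrix (Fin d) (Fin d) ℝ} (hM : M.PosSemidef)
    (x : Fin d → ℝ) : x ⬝ᵥ (M *ᵥ x) ≤ M.trace * (x ⬝ᵥ x) := by
  have hH := hM.isHermitian
  set U : Matrix (Fin d) (Fin d) ℝ := (hH.eigenvectorUnitary : Matrix (Fin d) (Fin d) ℝ) with hU
  have hspec := hH.spectral_theorem
  rw [Unitary.conjStarAlgAut_apply] at hspec
  have hUU : U * star U = 1 := (Matrix.mem_unitaryGroup_iff).mp hH.eigenvectorUnitary.2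
  have hstar : star U = Uᵀ := by
    rw [Matrix.star_eq_conjTranspose, Matrix.conjTranspose_eq_transpose_of_trivial]
  set y : Fin d → ℝ := x ᵥ* U with hy
  have hyv : (star U) *ᵥ x = y := by rw [hstar, Matrix.mulVec_transpose]
  have hev : ∀ i, 0 ≤ hH.eigenvalues i := fun i => hM.eigenvalues_nonneg i
  have hD : diagonal (RCLike.ofReal ∘ hH.eigenvalues) = diagonal hH.eigenvalues := by congr 1
  have htr : M.trace = ∑ i, hH.eigenvalues i := by
    conv_lhs => rw [hspec]
    rw [hD, Matrix.trace_mul_comm, ← Matrix.mul_assoc, ← hU,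
      (Matrix.mem_unitaryGroup_iff').mp hH.eigenvectorUnitary.2, Matrix.one_mul]
    simp [Matrix.trace_diagonal]
  have hx : x ⬝ᵥ (M *ᵥ x) = ∑ i, hH.eigenvalues i * (y i)^2 := by
    conv_lhs => rw [hspec]
    rw [hD, ← hU, ← Matrix.mulVec_mulVec, ← Matrix.mulVec_mulVec, hyv,
      Matrix.dotProduct_mulVec x U, ← hy]
    simp [dotProduct, Matrix.mulVec_diagonal, pow_two]
    congr 1; ext i; ring
  have hxx : x ⬝ᵥ x = ∑ i, (y i)^2 := by
    have h5 : y ⬝ᵥ y = x ⬝ᵥ x := by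
      nth_rewrite 2 [← hyv]
      rw [Matrix.dotProduct_mulVec, hy, Matrix.vecMul_vecMul, hUU, Matrix.vecMul_one]
    rw [← h5]; simp [dotProduct, pow_two]
  rw [hx, hxx, htr, Finset.sum_mul]
  refine Finset.sum_le_sum fun i _ => ?_
  exact mul_le_mul_of_nonneg_left
    (Finset.single_le_sum (fun j _ => sq_nonneg (y j)) (Finset.mem_univ i)) (hev i)

lemma aux_one_lt_trace_of_not_loewner {A Y : Matrix (Fin d) (Fin d) ℝ} (hA : A.PosDef)
    (hY : Y.PosSemidef) (h : ¬ (A - Y).PosSemidef) : 1 < (A⁻¹ * Y).trace := by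
  have hAdet : IsUnit A.det := hA.det_pos.ne'.isUnit
  have hAinv : (A⁻¹).PosDef := hA.inv
  have hAiPS := hAinv.posSemidef
  set B := hAiPS.sqrt with hBdef
  have hB := hAiPS.posSemidef_sqrt
  have hBB : B * B = A⁻¹ := hAiPS.sqrt_mul_self
  have hBdet : IsUnit B.det := by
    have h0 : B.det * B.det = A⁻¹.det := by rw [← Matrix.det_mul, hBB]
    have hne : A⁻¹.det ≠ 0 := hAinv.det_pos.ne'
    have hne2 : B.det ≠ 0 := fun h1 => hne (by rw [← h0, h1, mul_zero])
    exact hne2.isUnit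
  have hBinv : B⁻¹ * B = 1 := Matrix.nonsing_inv_mul B hBdet
  have hBinv' : B * B⁻¹ = 1 := Matrix.mul_nonsing_inv B hBdet
  set M := B * Y * B with hMdef
  have hMps : M.PosSemidef := by
    have h3 := hY.mul_mul_conjTranspose_same B
    rwa [hB.isHermitian.eq] at h3
  have htrM : M.trace = (A⁻¹ * Y).trace := by
    rw [hMdef, Matrix.trace_mul_comm, ← Matrix.mul_assoc, hBB]
  have hnot : ¬ (1 - M).PosSemidef := by
    intro hps
    apply h
    have h4 := hps.mul_mul_conjTranspose_same B⁻¹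
    have hBiH : (B⁻¹)ᴴ = B⁻¹ := by
      rw [Matrix.conjTranspose_nonsing_inv, hB.isHermitian.eq]
    rw [hBiH] at h4
    have heq : B⁻¹ * (1 - M) * B⁻¹ = A - Y := by
      rw [hMdef, Matrix.mul_sub, Matrix.sub_mul, Matrix.mul_one]
      have h5 : B⁻¹ * (B * Y * B) * B⁻¹ = Y := by
        rw [← Matrix.mul_assoc, Matrix.mul_assoc (B⁻¹ * (B * Y)), hBinv', Matrix.mul_one,
          ← Matrix.mul_assoc, hBinv, Matrix.one_mul]
      rw [h5]
      congr 1
      rw [← Matrix.mul_inv_rev, hBB, Matrix.nonsing_inv_nonsing_inv A hAdet]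
    rwa [heq] at h4
  have hherm : (1 - M).IsHermitian := (Matrix.isHermitian_one).sub hMps.isHermitian
  rw [Matrix.posSemidef_iff_dotProduct_mulVec, not_and] at hnot
  have hx := hnot hherm
  push_neg at hx
  obtain ⟨x, hx⟩ := hx
  have hstarx : star x = x := by simp
  rw [hstarx, Matrix.sub_mulVec, Matrix.one_mulVec, dotProduct_sub, sub_neg] at hx
  have hnn : (0:ℝ) ≤ x ⬝ᵥ x := Finset.sum_nonneg fun i _ => mul_self_nonneg (x i)
  have hq := aux_quadform_le_trace hMps x
  have h7 : 1 < M.trace := by nlinarith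
  rwa [htrM] at h7

lemma aux_ville {Ω : Type*} {m0 : MeasurableSpace Ω} {μ : Measure Ω} [IsProbabilityMeasure μ]
    {𝒢 : Filtration ℕ m0} {f : ℕ → Ω → ℝ} (hf : Supermartingale f 𝒢 μ)
    (hnn : ∀ n, 0 ≤ᵐ[μ] f n) :
    μ {ω | ∃ n, 1 ≤ f n ω} ≤ ENNReal.ofReal (∫ ω, f 0 ω ∂μ) := by
  have hkey : ∀ n : ℕ, μ {ω | ∃ k ≤ n, 1 ≤ f k ω} ≤ ENNReal.ofReal (∫ ω, f 0 ω ∂μ) := by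
    intro n
    set τ : Ω → ℕ := hittingBtwn f (Set.Ici (1:ℝ)) 0 n with hτdef
    have hτ : IsStoppingTime 𝒢 (fun ω => WithTop.some (τ ω)) :=
      Adapted.isStoppingTime_hittingBtwn hf.stronglyAdapted.adapted measurableSet_Ici
    have hbdd : ∀ ω, WithTop.some (τ ω) ≤ n := fun ω => WithTop.coe_le_coe.2 (hittingBtwn_le ω)
    set g : Ω → ℝ := stoppedValue f (fun ω => WithTop.some (τ ω)) with hgdef
    have hint_g : Integrable g μ := by
      have := (hf.neg.integrable_stoppedValue hτ hbdd).neg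
      convert this using 1
      ext ω
      simp [hgdef, stoppedValue]
    have hos : ∫ ω, g ω ∂μ ≤ ∫ ω, f 0 ω ∂μ := by
      have h := hf.neg.expected_stoppedValue_mono (isStoppingTime_const 𝒢 0) hτ
        (fun ω => WithTop.coe_le_coe.2 (Nat.zero_le _)) hbdd
      have e1 : stoppedValue (-f) (fun _ => WithTop.some (0:ℕ)) = -f 0 := by
        ext ω; simp [stoppedValue]
      have e2 : stoppedValue (-f) (fun ω => WithTop.some (τ ω)) = -g := by
        ext ω; simp [hgdef, stoppedValue]
      rw [e1, e2] at h
      simp only [Pi.neg_apply] at h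
      rw [integral_neg, integral_neg, neg_le_neg_iff] at h
      exact h
    have hEmeas : MeasurableSet {ω | ∃ k ≤ n, 1 ≤ f k ω} := by
      have he : {ω | ∃ k ≤ n, 1 ≤ f k ω} = ⋃ k, ⋃ _ : k ≤ n, {ω | 1 ≤ f k ω} := by
        ext ω; simp
      rw [he]
      refine MeasurableSet.iUnion fun k => MeasurableSet.iUnion fun _ => ?_
      exact measurableSet_le measurable_const ((hf.stronglyAdapted k).measurable.le (𝒢.le k))
    have hge : ∀ ω ∈ {ω | ∃ k ≤ n, 1 ≤ f k ω}, 1 ≤ g ω := by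
      rintro ω ⟨k, hk, hfk⟩
      exact stoppedValue_hittingBtwn_mem ⟨k, ⟨Nat.zero_le _, hk⟩, hfk⟩
    have hg_nonneg : 0 ≤ᵐ[μ] g := by
      filter_upwards [ae_all_iff.2 hnn] with ω hω
      exact hω (τ ω)
    have h1 : 1 * (μ {ω | ∃ k ≤ n, 1 ≤ f k ω}).toReal ≤ ∫ ω in {ω | ∃ k ≤ n, 1 ≤ f k ω}, g ω ∂μ :=
      by simpa [measureReal_def] using
        setIntegral_ge_of_const_le_real hEmeas (measure_ne_top μ _) hge hint_g.integrableOn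
    have h2 : ∫ ω in {ω | ∃ k ≤ n, 1 ≤ f k ω}, g ω ∂μ ≤ ∫ ω, g ω ∂μ :=
      setIntegral_le_integral hint_g hg_nonneg
    calc μ {ω | ∃ k ≤ n, 1 ≤ f k ω}
        = ENNReal.ofReal (μ {ω | ∃ k ≤ n, 1 ≤ f k ω}).toReal :=
          (ENNReal.ofReal_toReal (measure_ne_top μ _)).symm
      _ ≤ ENNReal.ofReal (∫ ω, f 0 ω ∂μ) := by
          refine ENNReal.ofReal_le_ofReal ?_
          nlinarith [h1, h2, hos]
  have hset : {ω | ∃ n, 1 ≤ f n ω} = ⋃ n, {ω | ∃ k ≤ n, 1 ≤ f k ω} := by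
    ext ω
    simp only [Set.mem_setOf_eq, Set.mem_iUnion]
    exact ⟨fun ⟨n, hn⟩ => ⟨n, n, le_rfl, hn⟩, fun ⟨n, k, _, hk⟩ => ⟨k, hk⟩⟩
  have hmono : Monotone fun n => {ω | ∃ k ≤ n, 1 ≤ f k ω} := by
    rintro a b hab ω ⟨k, hk, h⟩
    exact ⟨k, hk.trans hab, h⟩
  rw [hset, hmono.measure_iUnion]
  exact iSup_le hkey

lemma aux_trace_mul_eq_sum (A M : Matrix (Fin d) (Fin d) ℝ) :
    (A * M).trace = ∑ p : Fin d × Fin d, A p.1 p.2 * M p.2 p.1 := by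
  rw [Matrix.trace, Fintype.sum_prod_type]
  simp [Matrix.mul_apply, Matrix.diag]

end VilleAux

/-- **Matrix Ville's inequality (time-uniform form).**
For an a.s. positive semidefinite matrix supermartingale `Y` and `A ≻ 0`:
`P( ∃ n, Yₙ ⋠ A ) ≤ tr( E[Y₀] A⁻¹ )`. -/
theorem stmt11 {Ω : Type*} {m0 : MeasurableSpace Ω} (μ : Measure Ω) [IsProbabilityMeasure μ]
    {d : ℕ} (ℱ : Filtration ℕ m0)
    (Y : ℕ → Ω → Matrix (Fin d) (Fin d) ℝ)
    (hY : IsMatrixSupermartingale ℱ μ Y)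
    (hpos : ∀ n, ∀ᵐ ω ∂μ, (Y n ω).PosSemidef)
    (A : Matrix (Fin d) (Fin d) ℝ) (hA : A.PosDef) :
    μ {ω | ∃ n, ¬ LoewnerLE (Y n ω) A} ≤
      ENNReal.ofReal ((matExpect μ (Y 0) * A⁻¹).trace) := by
  obtain ⟨hherm, hmeas, hint, hsmart⟩ := hY
  have hAi : (A⁻¹).PosSemidef := hA.inv.posSemidef
  set f : ℕ → Ω → ℝ := fun n ω => (A⁻¹ * Y n ω).trace with hfdef
  have hrw : ∀ n, f n = fun ω => ∑ p : Fin d × Fin d, A⁻¹ p.1 p.2 * Y n ω p.2 p.1 :=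
    fun n => funext fun ω => aux_trace_mul_eq_sum _ _
  have hadp : StronglyAdapted ℱ f := by
    intro n
    rw [hrw n]
    exact Finset.stronglyMeasurable_fun_sum _ fun p _ => ((hmeas n p.2 p.1).const_mul _)
  have hintf : ∀ n, Integrable (f n) μ := by
    intro n
    rw [hrw n]
    exact integrable_finset_sum _ fun p _ => (hint n p.2 p.1).const_mul _
  have hsup : Supermartingale f ℱ μ := by
    refine supermartingale_nat hadp hintf fun n => ?_
    have hrw2 : f (n+1) = ∑ p : Fin d × Fin d,
        (fun ω => A⁻¹ p.1 p.2 * Y (n+1) ω p.2 p.1) := by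
      funext ω
      rw [Finset.sum_apply]
      exact aux_trace_mul_eq_sum _ _
    have h2 := condExp_finsetSum (μ := μ) (m := ℱ n)
      (f := fun (p : Fin d × Fin d) => fun ω => A⁻¹ p.1 p.2 * Y (n+1) ω p.2 p.1) (s := Finset.univ)
      (fun p _ => (hint (n+1) p.2 p.1).const_mul (A⁻¹ p.1 p.2))
    have hce0 : μ[f (n+1)|ℱ n] =ᵐ[μ]
        ∑ p : Fin d × Fin d, μ[fun ω => A⁻¹ p.1 p.2 * Y (n+1) ω p.2 p.1|ℱ n] := by
      rw [hrw2]; exact h2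
    have h3 : ∀ p : Fin d × Fin d,
        μ[fun ω => A⁻¹ p.1 p.2 * Y (n+1) ω p.2 p.1|ℱ n] =ᵐ[μ]
          fun ω => A⁻¹ p.1 p.2 * (μ[fun ω' => Y (n+1) ω' p.2 p.1|ℱ n]) ω := by
      intro p
      exact condExp_smul (μ := μ) (m := ℱ n) (A⁻¹ p.1 p.2) (fun ω => Y (n+1) ω p.2 p.1)
    filter_upwards [hce0, ae_all_iff.2 h3, hsmart n] with ω ha hb hc
    have hmce : ∀ i j, matCondExp μ (ℱ n) (Y (n+1)) ω i j
        = (μ[fun ω' => Y (n+1) ω' i j|ℱ n]) ω := fun i j => rfl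
    have step : (μ[f (n+1)|ℱ n]) ω = (A⁻¹ * matCondExp μ (ℱ n) (Y (n+1)) ω).trace := by
      rw [ha, Finset.sum_apply, aux_trace_mul_eq_sum]
      exact Finset.sum_congr rfl fun p _ => by rw [hb p, hmce]
    rw [step]
    have hps : ((Y n ω) - matCondExp μ (ℱ n) (Y (n+1)) ω).PosSemidef := hc
    have h6 := aux_trace_mul_nonneg hAi hps
    rw [Matrix.mul_sub, Matrix.trace_sub] at h6
    have : f n ω = (A⁻¹ * Y n ω).trace := rfl
    rw [this]
    linarith
  have hfnn : ∀ n, 0 ≤ᵐ[μ] f n := by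
    intro n
    filter_upwards [hpos n] with ω hω
    exact aux_trace_mul_nonneg hAi hω
  have hsub : μ {ω | ∃ n, ¬ LoewnerLE (Y n ω) A} ≤ μ {ω | ∃ n, 1 ≤ f n ω} := by
    refine measure_mono_ae ?_
    filter_upwards [ae_all_iff.2 hpos] with ω hω
    rintro ⟨n, hn⟩
    simp only [LoewnerLE] at hn
    exact ⟨n, (aux_one_lt_trace_of_not_loewner hA (hω n) hn).le⟩
  have hint0 : ∫ ω, f 0 ω ∂μ = (matExpect μ (Y 0) * A⁻¹).trace := by
    have he : ∫ ω, f 0 ω ∂μ = ∑ p : Fin d × Fin d, A⁻¹ p.1 p.2 * ∫ ω, Y 0 ω p.2 p.1 ∂μ := by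
      rw [show (fun ω => f 0 ω) = fun ω => ∑ p : Fin d × Fin d, A⁻¹ p.1 p.2 * Y 0 ω p.2 p.1
        from funext fun ω => aux_trace_mul_eq_sum _ _]
      rw [integral_finset_sum _ fun p _ => (hint 0 p.2 p.1).const_mul _]
      exact Finset.sum_congr rfl fun p _ => integral_const_mul _ _
    rw [he, Matrix.trace_mul_comm, aux_trace_mul_eq_sum]
    rfl
  calc μ {ω | ∃ n, ¬ LoewnerLE (Y n ω) A} ≤ μ {ω | ∃ n, 1 ≤ f n ω} := hsub
    _ ≤ ENNReal.ofReal (∫ ω, f 0 ω ∂μ) := aux_ville hsup hfnn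
    _ = _ := by rw [hint0]

end
end
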